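/- Assume the setup for induced HNN sequences: {G_i, λ_i} is an inverse sequence of groups, for each i there are subgroups H_i, H_i′ ≤ G_i and an isomorphism φ_i : H_i → H_i′, and for each i ≥ 1 one has λ_i(H_i) ⊆ H_{i−1}, λ_i(H_i′) ⊆ H_{i−1}′, and φ_{i−1}(λ_i(h)) = λ_i(φ_i(h)) for all h ∈ H_i. Suppose in addition that the inverse sequences {G_i, λ_i} and {H_i, μ_i}, where μ_i is the restriction of λ_i to H_i, are stable (hence so is {H_i′, μ_i′} with μ_i′ the restriction of λ_i to H_i′). Then the componentwise map (h_i)_{i≥0} ↦ (φ_i(h_i))_{i≥0} defines an isomorphism from the inverse limit lim{H_i, μ_i} onto the inverse limit lim{H_i′, μ_i′}, both viewed as subgroups of lim{G_i, λ_i}, and the induced HNN sequence {G_i∗_{φ_i}, λ̄_i} is stable. -/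

import Mathlib

universe u

/-- The composite bonding homomorphism `λ_{i,j} : G_j →* G_i` of an inverse sequence of
groups, for `i ≤ j`. -/
def invSeqComp {G : ℕ → Type u} [∀ i, Group (G i)] (lam : ∀ i, G (i + 1) →* G i)
    {i j : ℕ} (h : i ≤ j) : G j →* G i :=
  Nat.leRecOn h (fun {k} f => f.comp (lam k)) (MonoidHom.id (G i))

/-- An inverse sequence of groups is **pro-monomorphic** if there exists `i` such that for
every `j ≥ i` there exists `k₀ ≥ j` with `ker (λ_{i,k}) = ker (λ_{j,k})` for all `k ≥ k₀`. -/
def ProMono {G : ℕ → Type u} [∀ i, Group (G i)] (lam : ∀ i, G (i + 1) →* G i) : Prop :=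
  ∃ i : ℕ, ∀ j : ℕ, ∀ hij : i ≤ j, ∃ k₀ : ℕ, ∃ hjk₀ : j ≤ k₀, ∀ k : ℕ, ∀ hk₀k : k₀ ≤ k,
    (invSeqComp lam (hij.trans (hjk₀.trans hk₀k))).ker =
      (invSeqComp lam (hjk₀.trans hk₀k)).ker

/-- An inverse sequence of groups is **semistable** (Mittag-Leffler) if for every `i` there
exists `j ≥ i` such that `Im (λ_{i,k}) = Im (λ_{i,j})` for all `k ≥ j`. -/
def Semistable {G : ℕ → Type u} [∀ i, Group (G i)] (lam : ∀ i, G (i + 1) →* G i) : Prop :=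
  ∀ i : ℕ, ∃ j : ℕ, ∃ hij : i ≤ j, ∀ k : ℕ, ∀ hjk : j ≤ k,
    (invSeqComp lam (hij.trans hjk)).range = (invSeqComp lam hij).range

/-- An inverse sequence of groups is **stable** if it is pro-monomorphic and semistable. -/
def Stable {G : ℕ → Type u} [∀ i, Group (G i)] (lam : ∀ i, G (i + 1) →* G i) : Prop :=
  ProMono lam ∧ Semistable lam

/-- The inverse limit of an inverse sequence of groups, as a subgroup of the product. -/
def invLim {G : ℕ → Type u} [∀ i, Group (G i)] (lam : ∀ i, G (i + 1) →* G i) :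
    Subgroup (∀ i, G i) where
  carrier := {x | ∀ i, lam i (x (i + 1)) = x i}
  one_mem' := fun i => map_one (lam i)
  mul_mem' := by
    intro a b ha hb i
    simp only [Pi.mul_apply, map_mul, ha i, hb i]
  inv_mem' := by
    intro a ha i
    simp only [Pi.inv_apply, map_inv, ha i]

section Aux
variable {G : ℕ → Type u} [∀ i, Group (G i)] (lam : ∀ i, G (i + 1) →* G i)
lemma invSeqComp_self {i : ℕ} (h : i ≤ i) : invSeqComp lam h = MonoidHom.id (G i) :=
  Nat.leRecOn_self _
lemma invSeqComp_succ {i k : ℕ} (h : i ≤ k) (h2 : i ≤ k + 1) :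
    invSeqComp lam h2 = (invSeqComp lam h).comp (lam k) :=
  Nat.leRecOn_succ h _

lemma invSeqComp_trans {i j k : ℕ} (hij : i ≤ j) (hjk : j ≤ k) :
    invSeqComp lam (hij.trans hjk) = (invSeqComp lam hij).comp (invSeqComp lam hjk) := by
  induction k, hjk using Nat.le_induction with
  | base => rw [invSeqComp_self lam (le_refl j)]; rfl
  | succ k hjk ih =>
    rw [invSeqComp_succ lam (hij.trans hjk) (hij.trans hjk.step),
      invSeqComp_succ lam hjk hjk.step, ih, MonoidHom.comp_assoc]

lemma invSeqComp_eq_one_of_le {a b k : ℕ} (hab : a ≤ b) (hbk : b ≤ k) {g : G k}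
    (hg : invSeqComp lam hbk g = 1) : invSeqComp lam (hab.trans hbk) g = 1 := by
  rw [invSeqComp_trans lam hab hbk, MonoidHom.comp_apply, hg, map_one]

lemma invSeqComp_mem (K : ∀ i, Subgroup (G i)) (hK : ∀ i, ∀ g ∈ K (i + 1), lam i g ∈ K i)
    {i k : ℕ} (h : i ≤ k) {g : G k} (hg : g ∈ K k) : invSeqComp lam h g ∈ K i := by
  induction k, h using Nat.le_induction with
  | base => rw [invSeqComp_self]; exact hg
  | succ k hik ih =>
    rw [invSeqComp_succ lam hik]
    exact ih (hK k g hg)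

lemma invSeqComp_coe (K : ∀ i, Subgroup (G i)) (nu : ∀ i, K (i + 1) →* K i)
    (hnu : ∀ i (x : K (i + 1)), ((nu i x : K i) : G i) = lam i (x : G (i + 1)))
    {i k : ℕ} (h : i ≤ k) (x : K k) :
    ((invSeqComp (G := fun i => K i) nu h x : K i) : G i) = invSeqComp lam h (x : G k) := by
  induction k, h using Nat.le_induction with
  | base => rw [invSeqComp_self, invSeqComp_self]; rfl
  | succ k hik ih =>
    rw [invSeqComp_succ (G := fun i => K i) nu hik, invSeqComp_succ lam hik,
      MonoidHom.comp_apply, MonoidHom.comp_apply, ih, hnu]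
end Aux

section Phi
variable {G : ℕ → Type u} [∀ i, Group (G i)] (lam : ∀ i, G (i + 1) →* G i)
    (H H' : ∀ i, Subgroup (G i)) (φ : ∀ i, H i ≃* H' i)
    (hH : ∀ i, ∀ h ∈ H (i + 1), lam i h ∈ H i)
    (hH' : ∀ i, ∀ h ∈ H' (i + 1), lam i h ∈ H' i)
    (hcomp : ∀ i (h : H (i + 1)) (hm : lam i (h : G (i + 1)) ∈ H i),
      ((φ i) ⟨lam i (h : G (i + 1)), hm⟩ : G i) = lam i ((φ (i + 1)) h))

include hH hcomp in
lemma phi_invSeqComp {i k : ℕ} (h : i ≤ k) (x : H k)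
    (hm : invSeqComp lam h (x : G k) ∈ H i) :
    ((φ i) ⟨invSeqComp lam h (x : G k), hm⟩ : G i)
      = invSeqComp lam h ((φ k x : H' k) : G k) := by
  induction k, h using Nat.le_induction with
  | base =>
    have hx : (⟨invSeqComp lam (le_refl i) (x : G i), hm⟩ : H i) = x :=
      Subtype.ext (show invSeqComp lam _ (x : G i) = (x : G i) by rw [invSeqComp_self]; rfl)
    rw [hx]
    conv_rhs => rw [invSeqComp_self]
    rfl
  | succ k hik ih =>
    have e : ∀ g : G (k + 1), invSeqComp lam (hik.trans k.le_succ) g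
        = invSeqComp lam hik (lam k g) := by
      intro g; rw [invSeqComp_succ lam hik]; rfl
    set x' : H k := ⟨lam k (x : G (k + 1)), hH k _ x.2⟩ with hx'
    have hm' : invSeqComp lam hik (x' : G k) ∈ H i := by
      rw [← e]; exact hm
    have h1 : (⟨invSeqComp lam (hik.trans k.le_succ) (x : G (k + 1)), hm⟩ : H i)
        = ⟨invSeqComp lam hik (x' : G k), hm'⟩ :=
      Subtype.ext (e _)
    rw [h1, ih x' hm']
    have h2 : ((φ k x' : H' k) : G k) = lam k ((φ (k + 1) x : H' (k + 1)) : G (k + 1)) :=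
      hcomp k x _
    rw [h2, ← MonoidHom.comp_apply, ← invSeqComp_succ lam hik]

include hH hcomp in
lemma phi_symm_invSeqComp {i k : ℕ} (h : i ≤ k) (x' : H' k)
    (hm : invSeqComp lam h (x' : G k) ∈ H' i) :
    (((φ i).symm ⟨invSeqComp lam h (x' : G k), hm⟩ : H i) : G i)
      = invSeqComp lam h (((φ k).symm x' : H k) : G k) := by
  set x : H k := (φ k).symm x'
  have h1 : invSeqComp lam h (x : G k) ∈ H i := invSeqComp_mem lam H hH h x.2
  have h2 := phi_invSeqComp lam H H' φ hH hcomp h x h1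
  have h3 : ((φ k x : H' k) : G k) = (x' : G k) := by
    show (((φ k) ((φ k).symm x') : H' k) : G k) = _
    rw [MulEquiv.apply_symm_apply]
  rw [h3] at h2
  have h4 : (φ i) ⟨invSeqComp lam h (x : G k), h1⟩ = ⟨invSeqComp lam h (x' : G k), hm⟩ :=
    Subtype.ext h2
  have h5 : (⟨invSeqComp lam h (x : G k), h1⟩ : H i)
      = (φ i).symm ⟨invSeqComp lam h (x' : G k), hm⟩ := by
    rw [← h4, MulEquiv.symm_apply_apply]
  rw [← h5]

end Phi

section Mu
variable {G : ℕ → Type u} [∀ i, Group (G i)] (lam : ∀ i, G (i + 1) →* G i)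
    (H H' : ∀ i, Subgroup (G i)) (φ : ∀ i, H i ≃* H' i)
    (hH : ∀ i, ∀ h ∈ H (i + 1), lam i h ∈ H i)
    (hcomp : ∀ i (h : H (i + 1)) (hm : lam i (h : G (i + 1)) ∈ H i),
      ((φ i) ⟨lam i (h : G (i + 1)), hm⟩ : G i) = lam i ((φ (i + 1)) h))
    (mu : ∀ i, H (i + 1) →* H i) (mu' : ∀ i, H' (i + 1) →* H' i)
    (hmu : ∀ i (h : H (i + 1)), ((mu i h : H i) : G i) = lam i (h : G (i + 1)))
    (hmu' : ∀ i (h : H' (i + 1)), ((mu' i h : H' i) : G i) = lam i (h : G (i + 1)))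

include hH hcomp hmu hmu' in
lemma mu'_phi_invSeqComp {i k : ℕ} (h : i ≤ k) (x : H k) :
    invSeqComp (G := fun i => H' i) mu' h (φ k x)
      = φ i (invSeqComp (G := fun i => H i) mu h x) := by
  induction k, h using Nat.le_induction with
  | base => rw [invSeqComp_self, invSeqComp_self]; rfl
  | succ k hik ih =>
    rw [invSeqComp_succ (G := fun i => H' i) mu' hik,
      invSeqComp_succ (G := fun i => H i) mu hik, MonoidHom.comp_apply,
      MonoidHom.comp_apply]
    have step : mu' k (φ (k + 1) x) = φ k (mu k x) := by
      have h1 : mu k x = ⟨lam k (x : G (k + 1)), hH k _ x.2⟩ := Subtype.ext (hmu k x)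
      apply Subtype.ext
      rw [hmu' k, h1, hcomp k x]
    rw [step, ih]
end Mu

section HNNWord
open HNNExtension
variable {Gk : Type u} [Group Gk] (A B : Subgroup Gk) (φ : A ≃* B)

def hnnWord (hd : Gk) (l : List (ℤˣ × Gk)) : HNNExtension Gk A B φ :=
  of hd * (l.map fun p => t ^ (p.1 : ℤ) * of p.2).prod

lemma hnnWord_eq_reducedWord_prod (hd : Gk) (l : List (ℤˣ × Gk))
    (hchain : l.IsChain (fun a b => a.2 ∈ toSubgroup A B a.1 → a.1 = b.1)) :
    hnnWord A B φ hd l = (⟨hd, l, hchain⟩ : NormalWord.ReducedWord Gk A B).prod φ := rfl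

lemma hnnWord_nil (hd : Gk) : hnnWord A B φ hd [] = of hd := by
  simp [hnnWord]

lemma hnnWord_mul_of (hd : Gk) (l : List (ℤˣ × Gk)) (g : Gk) :
    ∃ hd' l', hnnWord A B φ hd l * of g = hnnWord A B φ hd' l' ∧ l'.length = l.length := by
  rcases l.eq_nil_or_concat with rfl | ⟨l', p, rfl⟩
  · exact ⟨hd * g, [], by simp [hnnWord], rfl⟩
  · refine ⟨hd, l' ++ [(p.1, p.2 * g)], ?_, by simp⟩
    simp [hnnWord, mul_assoc]

lemma hnnWord_mul_t (hd : Gk) (l : List (ℤˣ × Gk)) (u : ℤˣ) :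
    hnnWord A B φ hd l * t ^ (u : ℤ) = hnnWord A B φ hd (l ++ [(u, 1)]) := by
  simp [hnnWord, mul_assoc]

lemma hnnWord_mul_word (x : HNNExtension Gk A B φ)
    (hx : ∃ hd l, x = hnnWord A B φ hd l) (hd' : Gk) (l' : List (ℤˣ × Gk)) :
    ∃ hd'' l'', x * hnnWord A B φ hd' l' = hnnWord A B φ hd'' l'' := by
  induction l' generalizing x hd' with
  | nil =>
    rcases hx with ⟨hd, l, rfl⟩
    rw [hnnWord_nil]
    rcases hnnWord_mul_of A B φ hd l hd' with ⟨hd'', l'', h, -⟩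
    exact ⟨hd'', l'', h⟩
  | cons p l' ih =>
    rcases hx with ⟨hd, l, rfl⟩
    rcases hnnWord_mul_of A B φ hd l hd' with ⟨hd1, l1, h1, -⟩
    have key : hnnWord A B φ hd l * hnnWord A B φ hd' (p :: l')
        = (hnnWord A B φ hd1 (l1 ++ [(p.1, 1)])) * hnnWord A B φ p.2 l' := by
      rw [← hnnWord_mul_t, ← h1]
      simp [hnnWord, mul_assoc]
    rw [key]
    exact ih _ ⟨_, _, rfl⟩ _

lemma exists_hnnWord (x : HNNExtension Gk A B φ) : ∃ hd l, x = hnnWord A B φ hd l := by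
  have main : (∃ hd l, x = hnnWord A B φ hd l) ∧ (∃ hd l, x⁻¹ = hnnWord A B φ hd l) := by
    induction x using HNNExtension.induction_on with
    | of g =>
      exact ⟨⟨g, [], by simp [hnnWord]⟩, ⟨g⁻¹, [], by simp [hnnWord]⟩⟩
    | t =>
      constructor
      · exact ⟨1, [(1, 1)], by simp [hnnWord]⟩
      · exact ⟨1, [(-1, 1)], by simp [hnnWord]⟩
    | mul x y hx hy =>
      constructor
      · rcases hy.1 with ⟨hd, l, rfl⟩
        exact hnnWord_mul_word A B φ x hx.1 hd l
      · rw [mul_inv_rev]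
        rcases hx.2 with ⟨hd, l, hxl⟩
        rw [hxl]
        exact hnnWord_mul_word A B φ y⁻¹ hy.2 hd l
    | inv x hx => exact ⟨hx.2, by rw [inv_inv]; exact hx.1⟩
  exact main.1

lemma hnnWord_mem (S : Subgroup (HNNExtension Gk A B φ)) (htS : t ∈ S) (hd : Gk)
    (l : List (ℤˣ × Gk)) (hhd : of hd ∈ S) (hl : ∀ p ∈ l, of p.2 ∈ S) :
    hnnWord A B φ hd l ∈ S := by
  refine S.mul_mem hhd ?_
  induction l with
  | nil => simpa using S.one_mem
  | cons p l ih =>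
    rw [List.map_cons, List.prod_cons]
    exact S.mul_mem (S.mul_mem (S.zpow_mem htS _) (hl p (by simp)))
      (ih fun q hq => hl q (by simp [hq]))

lemma units_eq_neg_of_ne {u v : ℤˣ} (h : u ≠ v) : v = -u := by
  rcases Int.units_eq_one_or u with rfl | rfl <;>
    rcases Int.units_eq_one_or v with rfl | rfl <;> simp_all

lemma pinch_pos (a : Gk) (ha : a ∈ A) :
    (t ^ (((1 : ℤˣ) : ℤ)) * of a * t ^ (((-1 : ℤˣ) : ℤ))
      : HNNExtension Gk A B φ) = of ((φ ⟨a, ha⟩ : B) : Gk) := by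
  have h1 : (t * of a : HNNExtension Gk A B φ) = of ((φ ⟨a, ha⟩ : B) : Gk) * t :=
    t_mul_of (⟨a, ha⟩ : A)
  have h3 : ((-1 : ℤˣ) : ℤ) = -1 := rfl
  have h2 : ((1 : ℤˣ) : ℤ) = 1 := rfl
  rw [h3, zpow_neg_one, h2, zpow_one, h1, mul_assoc, mul_inv_cancel, mul_one]

lemma pinch_neg (b : Gk) (hb : b ∈ B) :
    (t ^ (((-1 : ℤˣ) : ℤ)) * of b * t ^ (((1 : ℤˣ) : ℤ))
      : HNNExtension Gk A B φ) = of ((φ.symm ⟨b, hb⟩ : A) : Gk) := by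
  have h1 : (t⁻¹ * of b : HNNExtension Gk A B φ) = of ((φ.symm ⟨b, hb⟩ : A) : Gk) * t⁻¹ :=
    inv_t_mul_of (φ := φ) (⟨b, hb⟩ : B)
  have h2 : ((-1 : ℤˣ) : ℤ) = -1 := rfl
  have h3 : ((1 : ℤˣ) : ℤ) = 1 := rfl
  rw [h2, h3, zpow_neg_one, zpow_one, h1, mul_assoc, inv_mul_cancel, mul_one]

lemma exists_split_of_not_chain' {α β : Type*} (R : β → β → Prop) (f : α → β) :
    ∀ l : List α, ¬ (l.map f).IsChain R →
      ∃ l₁ a b l₂, l = l₁ ++ a :: b :: l₂ ∧ ¬ R (f a) (f b) := by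
  intro l
  induction l with
  | nil => intro h; exact absurd List.isChain_nil h
  | cons x rest ih =>
    intro h
    rw [List.map_cons, List.isChain_cons, not_and_or] at h
    rcases h with h | h
    · push_neg at h
      rcases h with ⟨y, hy, hRy⟩
      rcases rest with _ | ⟨r, rest'⟩
      · simp at hy
      · rw [List.map_cons, List.head?_cons, Option.mem_some_iff] at hy
        subst hy
        exact ⟨[], x, r, rest', rfl, hRy⟩
    · rcases ih h with ⟨l₁, a, b, l₂, rfl, hR⟩
      exact ⟨x :: l₁, a, b, l₂, rfl, hR⟩

lemma hnnWord_split (hd : Gk) (L₁ L₂ : List (ℤˣ × Gk)) (a b : ℤˣ × Gk) :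
    hnnWord A B φ hd (L₁ ++ a :: b :: L₂)
      = hnnWord A B φ hd L₁ * ((t ^ (a.1 : ℤ) * of a.2) * ((t ^ (b.1 : ℤ) * of b.2)
        * hnnWord A B φ 1 L₂)) := by
  simp [hnnWord, mul_assoc]

lemma hnnWord_merge_nil (hd x : Gk) (L₂ : List (ℤˣ × Gk)) :
    hnnWord A B φ hd [] * (of x * hnnWord A B φ 1 L₂) = hnnWord A B φ (hd * x) L₂ := by
  simp [hnnWord, mul_assoc]

lemma hnnWord_merge_concat (hd x : Gk) (L₁' L₂ : List (ℤˣ × Gk)) (p : ℤˣ × Gk) :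
    hnnWord A B φ hd (L₁' ++ [p]) * (of x * hnnWord A B φ 1 L₂)
      = hnnWord A B φ hd (L₁' ++ (p.1, p.2 * x) :: L₂) := by
  simp [hnnWord, mul_assoc]

end HNNWord

section Map
open HNNExtension

lemma map_hnnWord {G1 G2 : Type u} [Group G1] [Group G2] {A1 B1 : Subgroup G1}
    {φ1 : A1 ≃* B1} {A2 B2 : Subgroup G2} {φ2 : A2 ≃* B2}
    (f : HNNExtension G1 A1 B1 φ1 →* HNNExtension G2 A2 B2 φ2) (θ : G1 →* G2)
    (hf : ∀ g, f (of g) = of (θ g)) (hft : f t = t) (hd : G1) (l : List (ℤˣ × G1)) :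
    f (hnnWord A1 B1 φ1 hd l) = hnnWord A2 B2 φ2 (θ hd) (l.map fun p => (p.1, θ p.2)) := by
  unfold hnnWord
  rw [map_mul, hf]
  congr 1
  induction l with
  | nil => simp
  | cons p l ih =>
    simp only [List.map_cons, List.prod_cons, map_mul, map_zpow, hft, hf, ih]

variable {G : ℕ → Type u} [∀ i, Group (G i)] (lam : ∀ i, G (i + 1) →* G i)
    (H H' : ∀ i, Subgroup (G i)) (φ : ∀ i, H i ≃* H' i)
    (lamBar : ∀ i, HNNExtension (G (i + 1)) (H (i + 1)) (H' (i + 1)) (φ (i + 1)) →*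
        HNNExtension (G i) (H i) (H' i) (φ i))
    (hof : ∀ i (g : G (i + 1)), lamBar i (HNNExtension.of g) = HNNExtension.of (lam i g))
    (htt : ∀ i, lamBar i HNNExtension.t = HNNExtension.t)

include hof in
lemma lamBar_comp_of {i k : ℕ} (h : i ≤ k) (g : G k) :
    invSeqComp (G := fun i => HNNExtension (G i) (H i) (H' i) (φ i)) lamBar h (of g)
      = of (invSeqComp lam h g) := by
  induction k, h using Nat.le_induction with
  | base =>
    rw [invSeqComp_self, invSeqComp_self]; rfl
  | succ k hik ih =>
    rw [invSeqComp_succ (G := fun i => HNNExtension (G i) (H i) (H' i) (φ i)) lamBar hik,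
      invSeqComp_succ lam hik, MonoidHom.comp_apply, MonoidHom.comp_apply, hof, ih]

include htt in
lemma lamBar_comp_t {i k : ℕ} (h : i ≤ k) :
    invSeqComp (G := fun i => HNNExtension (G i) (H i) (H' i) (φ i)) lamBar h
      HNNExtension.t = HNNExtension.t := by
  induction k, h using Nat.le_induction with
  | base => rw [invSeqComp_self]; rfl
  | succ k hik ih =>
    rw [invSeqComp_succ (G := fun i => HNNExtension (G i) (H i) (H' i) (φ i)) lamBar hik,
      MonoidHom.comp_apply, htt, ih]

include hof htt in
lemma lamBar_comp_word {i k : ℕ} (h : i ≤ k) (hd : G k) (l : List (ℤˣ × G k)) :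
    invSeqComp (G := fun i => HNNExtension (G i) (H i) (H' i) (φ i)) lamBar h
        (hnnWord (H k) (H' k) (φ k) hd l)
      = hnnWord (H i) (H' i) (φ i) (invSeqComp lam h hd)
          (l.map fun p => (p.1, invSeqComp lam h p.2)) :=
  map_hnnWord _ (invSeqComp lam h) (lamBar_comp_of lam H H' φ lamBar hof h)
    (lamBar_comp_t H H' φ lamBar htt h) hd l

include hof htt in
lemma semistable_transfer {i j k : ℕ} (hij : i ≤ j) (hjk : j ≤ k)
    (hrange : (invSeqComp lam (hij.trans hjk)).range = (invSeqComp lam hij).range) :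
    (invSeqComp (G := fun i => HNNExtension (G i) (H i) (H' i) (φ i)) lamBar
        (hij.trans hjk)).range
      = (invSeqComp (G := fun i => HNNExtension (G i) (H i) (H' i) (φ i)) lamBar hij).range := by
  have key : ∀ (a b : ℕ) (hab : a ≤ b) (x : G a),
      x ∈ (invSeqComp lam hab).range →
      (HNNExtension.of x : HNNExtension (G a) (H a) (H' a) (φ a))
        ∈ (invSeqComp (G := fun i => HNNExtension (G i) (H i) (H' i) (φ i)) lamBar hab).range := by
    rintro a b hab x ⟨y, rfl⟩
    exact ⟨HNNExtension.of y, lamBar_comp_of lam H H' φ lamBar hof hab y⟩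
  apply le_antisymm
  · rintro x ⟨y, rfl⟩
    rcases exists_hnnWord (H k) (H' k) (φ k) y with ⟨hd, l, rfl⟩
    rw [lamBar_comp_word lam H H' φ lamBar hof htt]
    refine hnnWord_mem _ _ _ _ ?_ _ _ ?_ ?_
    · exact ⟨HNNExtension.t, lamBar_comp_t H H' φ lamBar htt hij⟩
    · refine key i j hij _ ?_
      rw [← hrange]; exact ⟨hd, rfl⟩
    · rintro p hp
      rw [List.mem_map] at hp
      rcases hp with ⟨q, hq, rfl⟩
      refine key i j hij _ ?_
      rw [← hrange]; exact ⟨q.2, rfl⟩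
  · rintro x ⟨y, rfl⟩
    rcases exists_hnnWord (H j) (H' j) (φ j) y with ⟨hd, l, rfl⟩
    rw [lamBar_comp_word lam H H' φ lamBar hof htt]
    refine hnnWord_mem _ _ _ _ ?_ _ _ ?_ ?_
    · exact ⟨HNNExtension.t, lamBar_comp_t H H' φ lamBar htt (hij.trans hjk)⟩
    · refine key i k (hij.trans hjk) _ ?_
      rw [hrange]; exact ⟨hd, rfl⟩
    · rintro p hp
      rw [List.mem_map] at hp
      rcases hp with ⟨q, hq, rfl⟩
      refine key i k (hij.trans hjk) _ ?_
      rw [hrange]; exact ⟨q.2, rfl⟩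

end Map

section Key
open HNNExtension

variable {G : ℕ → Type u} [∀ i, Group (G i)] (lam : ∀ i, G (i + 1) →* G i)
    (H H' : ∀ i, Subgroup (G i)) (φ : ∀ i, H i ≃* H' i)
    (hH : ∀ i, ∀ h ∈ H (i + 1), lam i h ∈ H i)
    (hH' : ∀ i, ∀ h ∈ H' (i + 1), lam i h ∈ H' i)
    (hcomp : ∀ i (h : H (i + 1)) (hm : lam i (h : G (i + 1)) ∈ H i),
      ((φ i) ⟨lam i (h : G (i + 1)), hm⟩ : G i) = lam i ((φ (i + 1)) h))
    (lamBar : ∀ i, HNNExtension (G (i + 1)) (H (i + 1)) (H' (i + 1)) (φ (i + 1)) →*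
        HNNExtension (G i) (H i) (H' i) (φ i))
    (hof : ∀ i (g : G (i + 1)), lamBar i (HNNExtension.of g) = HNNExtension.of (lam i g))
    (htt : ∀ i, lamBar i HNNExtension.t = HNNExtension.t)

include hH hH' hcomp hof htt in
lemma key_induction {i j k : ℕ} (hij : i ≤ j) (hjk : j ≤ k)
    (hker : ∀ g : G k, invSeqComp lam (hij.trans hjk) g = 1 → invSeqComp lam hjk g = 1)
    (hb : ∀ g : G k, invSeqComp lam (hij.trans hjk) g ∈ H i →
      ∃ h₀ : H k, invSeqComp lam hjk (g * (h₀ : G k)⁻¹) = 1)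
    (hc : ∀ g : G k, invSeqComp lam (hij.trans hjk) g ∈ H' i →
      ∃ h₀ : H' k, invSeqComp lam hjk (g * (h₀ : G k)⁻¹) = 1) :
    ∀ (n : ℕ) (hd : G k) (l : List (ℤˣ × G k)), l.length ≤ n →
      invSeqComp (G := fun i => HNNExtension (G i) (H i) (H' i) (φ i)) lamBar
        (hij.trans hjk) (hnnWord (H k) (H' k) (φ k) hd l) = 1 →
      invSeqComp (G := fun i => HNNExtension (G i) (H i) (H' i) (φ i)) lamBar
        hjk (hnnWord (H k) (H' k) (φ k) hd l) = 1 := by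
  have hbase : ∀ hd : G k,
      invSeqComp (G := fun i => HNNExtension (G i) (H i) (H' i) (φ i)) lamBar
        (hij.trans hjk) (hnnWord (H k) (H' k) (φ k) hd []) = 1 →
      invSeqComp (G := fun i => HNNExtension (G i) (H i) (H' i) (φ i)) lamBar
        hjk (hnnWord (H k) (H' k) (φ k) hd []) = 1 := by
    intro hd h1
    rw [hnnWord_nil] at h1 ⊢
    rw [lamBar_comp_of lam H H' φ lamBar hof] at h1 ⊢
    have h2 : invSeqComp lam (hij.trans hjk) hd = 1 := by
      apply HNNExtension.of_injective (φ := φ i)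
      rw [h1, map_one]
    rw [hker hd h2, map_one]
  intro n
  induction n with
  | zero =>
    intro hd l hlen h1
    have hl : l = [] := List.eq_nil_of_length_eq_zero (Nat.le_zero.mp hlen)
    subst hl
    exact hbase hd h1
  | succ n ih =>
    intro hd l hlen h1
    by_cases hchain : (l.map fun p => (p.1, invSeqComp lam (hij.trans hjk) p.2)).IsChain
        (fun a b => a.2 ∈ toSubgroup (H i) (H' i) a.1 → a.1 = b.1)
    · -- Britton's lemma forces `l = []`
      have hprod := lamBar_comp_word lam H H' φ lamBar hof htt (hij.trans hjk) hd l
      rw [hnnWord_eq_reducedWord_prod (H i) (H' i) (φ i) _ _ hchain] at hprod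
      have hmem : (⟨invSeqComp lam (hij.trans hjk) hd,
          l.map fun p => (p.1, invSeqComp lam (hij.trans hjk) p.2), hchain⟩ :
            NormalWord.ReducedWord (G i) (H i) (H' i)).prod (φ i)
          ∈ (HNNExtension.of.range :
              Subgroup (HNNExtension (G i) (H i) (H' i) (φ i))) := by
        rw [← hprod, h1]
        exact ⟨1, map_one _⟩
      have hnil := HNNExtension.ReducedWord.toList_eq_nil_of_mem_of_range (φ i) _ hmem
      simp only [List.map_eq_nil_iff] at hnil
      subst hnil
      exact hbase hd h1
    · obtain ⟨L₁, a, b, L₂, rfl, hR⟩ :=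
        exists_split_of_not_chain' _ _ l hchain
      obtain ⟨u, g⟩ := a
      obtain ⟨v, g'⟩ := b
      push_neg at hR
      obtain ⟨hmem, hne⟩ := hR
      dsimp only at hmem hne
      obtain rfl : v = -u := units_eq_neg_of_ne hne
      -- find the pinch data
      obtain ⟨c₀, c, hker0, hpinch⟩ : ∃ c₀ c : G k,
          invSeqComp lam hjk (g * c₀⁻¹) = 1 ∧
          ∀ (m : ℕ) (hmk : m ≤ k),
            (HNNExtension.t ^ ((u : ℤ)) * HNNExtension.of (invSeqComp lam hmk c₀)
                * HNNExtension.t ^ (((-u : ℤˣ) : ℤ)) :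
              HNNExtension (G m) (H m) (H' m) (φ m))
              = HNNExtension.of (invSeqComp lam hmk c) := by
        rcases Int.units_eq_one_or u with rfl | rfl
        · rw [HNNExtension.toSubgroup_one] at hmem
          obtain ⟨h₀, hker0⟩ := hb g hmem
          refine ⟨(h₀ : G k), ((φ k) h₀ : G k), hker0, ?_⟩
          intro m hmk
          have hmem' : invSeqComp lam hmk (h₀ : G k) ∈ H m :=
            invSeqComp_mem lam H hH hmk h₀.2
          rw [pinch_pos (H m) (H' m) (φ m) _ hmem']
          congr 1
          exact phi_invSeqComp lam H H' φ hH hcomp hmk h₀ hmem'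
        · rw [HNNExtension.toSubgroup_neg_one] at hmem
          obtain ⟨h₀, hker0⟩ := hc g hmem
          refine ⟨(h₀ : G k), (((φ k).symm) h₀ : G k), hker0, ?_⟩
          intro m hmk
          have hmem' : invSeqComp lam hmk (h₀ : G k) ∈ H' m :=
            invSeqComp_mem lam H' hH' hmk h₀.2
          simp only [neg_neg]
          rw [pinch_neg (H m) (H' m) (φ m) _ hmem']
          congr 1
          exact phi_symm_invSeqComp lam H H' φ hH hcomp hmk h₀ hmem'
      -- merge the pinched word
      obtain ⟨hd', l', hmerge, hlen'⟩ : ∃ (hd' : G k) (l' : List (ℤˣ × G k)),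
          hnnWord (H k) (H' k) (φ k) hd L₁
              * (HNNExtension.of (c * g') * hnnWord (H k) (H' k) (φ k) 1 L₂)
            = hnnWord (H k) (H' k) (φ k) hd' l' ∧
          l'.length + 2 = L₁.length + L₂.length + 2 := by
        rcases L₁.eq_nil_or_concat with rfl | ⟨L₁', p, rfl⟩
        · exact ⟨hd * (c * g'), L₂, hnnWord_merge_nil _ _ _ _ _ _, by simp⟩
        · refine ⟨hd, L₁' ++ (p.1, p.2 * (c * g')) :: L₂, ?_, by simp; omega⟩
          rw [List.concat_eq_append]
          exact hnnWord_merge_concat _ _ _ _ _ _ _ _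
      have hmid : ∀ (m : ℕ) (hmk : m ≤ k), invSeqComp lam hmk (g * c₀⁻¹) = 1 →
          invSeqComp (G := fun i => HNNExtension (G i) (H i) (H' i) (φ i)) lamBar hmk
              (hnnWord (H k) (H' k) (φ k) hd (L₁ ++ (u, g) :: (-u, g') :: L₂))
            = invSeqComp (G := fun i => HNNExtension (G i) (H i) (H' i) (φ i)) lamBar hmk
              (hnnWord (H k) (H' k) (φ k) hd' l') := by
        intro m hmk hk1
        have hθg : invSeqComp lam hmk g = invSeqComp lam hmk c₀ := by
          rw [map_mul, map_inv] at hk1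
          exact mul_inv_eq_one.mp hk1
        rw [← hmerge, hnnWord_split]
        simp only [map_mul, map_zpow, lamBar_comp_t H H' φ lamBar htt hmk,
          lamBar_comp_of lam H H' φ lamBar hof hmk, hθg]
        congr 1
        rw [← hpinch m hmk]
        group
      have hker0i : invSeqComp lam (hij.trans hjk) (g * c₀⁻¹) = 1 :=
        invSeqComp_eq_one_of_le lam hij hjk hker0
      have h1' : invSeqComp (G := fun i => HNNExtension (G i) (H i) (H' i) (φ i)) lamBar
          (hij.trans hjk) (hnnWord (H k) (H' k) (φ k) hd' l') = 1 := by
        rw [← hmid i (hij.trans hjk) hker0i]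
        exact h1
      have hlen2 : l'.length ≤ n := by
        simp only [List.length_append, List.length_cons] at hlen
        omega
      have h2 := ih hd' l' hlen2 h1'
      rw [hmid j hjk hker0]
      exact h2

end Key

section Assemble
variable {G : ℕ → Type u} [∀ i, Group (G i)] (lam : ∀ i, G (i + 1) →* G i)
    (H H' : ∀ i, Subgroup (G i)) (φ : ∀ i, H i ≃* H' i)
    (hH : ∀ i, ∀ h ∈ H (i + 1), lam i h ∈ H i)
    (hcomp : ∀ i (h : H (i + 1)) (hm : lam i (h : G (i + 1)) ∈ H i),
      ((φ i) ⟨lam i (h : G (i + 1)), hm⟩ : G i) = lam i ((φ (i + 1)) h))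

include hH hcomp in
lemma hcomp_symm : ∀ i (h' : H' (i + 1)) (hm : lam i (h' : G (i + 1)) ∈ H' i),
    (((φ i).symm ⟨lam i (h' : G (i + 1)), hm⟩ : H i) : G i)
      = lam i (((φ (i + 1)).symm h' : H (i + 1)) : G (i + 1)) := by
  intro i h' hm
  set x := (φ (i + 1)).symm h' with hx
  have h1 : lam i (x : G (i + 1)) ∈ H i := hH i _ x.2
  have h2 := hcomp i x h1
  rw [show (φ (i + 1)) x = h' from (φ (i + 1)).apply_symm_apply h'] at h2
  have h3 : (φ i) ⟨lam i (x : G (i + 1)), h1⟩ = ⟨lam i (h' : G (i + 1)), hm⟩ :=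
    Subtype.ext h2
  have h4 : (⟨lam i (x : G (i + 1)), h1⟩ : H i)
      = (φ i).symm ⟨lam i (h' : G (i + 1)), hm⟩ := by
    rw [← h3, MulEquiv.symm_apply_apply]
  rw [← h4]

end Assemble

/-- In the setup for induced HNN sequences, if the base sequence
`{G_i, λ_i}` and the sequence `{H_i, μ_i}` of associated subgroups (with `μ_i` the
restriction of `λ_i`, and hence also `{H_i', μ_i'}`) are stable, then the componentwise map
`(h_i) ↦ (φ_i(h_i))` defines an isomorphism from `lim {H_i, μ_i}` onto `lim {H_i', μ_i'}`
(both viewed as subgroups of `lim {G_i, λ_i}`), and the induced HNN sequence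
`{G_i∗_{φ_i}, λ̄_i}` is stable. -/
theorem induced_HNN_sequence_stable_of_stable
    {G : ℕ → Type u} [∀ i, Group (G i)] (lam : ∀ i, G (i + 1) →* G i)
    (H H' : ∀ i, Subgroup (G i)) (φ : ∀ i, H i ≃* H' i)
    (hH : ∀ i, ∀ h ∈ H (i + 1), lam i h ∈ H i)
    (hH' : ∀ i, ∀ h ∈ H' (i + 1), lam i h ∈ H' i)
    (hcomp : ∀ i (h : H (i + 1)) (hm : lam i (h : G (i + 1)) ∈ H i),
      ((φ i) ⟨lam i (h : G (i + 1)), hm⟩ : G i) = lam i ((φ (i + 1)) h))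
    -- `μ_i` and `μ_i'`, the restrictions of `λ_i` to the associated subgroups:
    (mu : ∀ i, H (i + 1) →* H i) (mu' : ∀ i, H' (i + 1) →* H' i)
    (hmu : ∀ i (h : H (i + 1)), ((mu i h : H i) : G i) = lam i (h : G (i + 1)))
    (hmu' : ∀ i (h : H' (i + 1)), ((mu' i h : H' i) : G i) = lam i (h : G (i + 1)))
    -- stability hypotheses:
    (hGstable : Stable lam)
    (hHstable : Stable (G := fun i => H i) mu) :
    -- the componentwise map `(h_i) ↦ (φ_i h_i)` is an isomorphism
    -- `lim {H_i, μ_i} ≃* lim {H_i', μ_i'}`, both viewed as subgroups of `lim {G_i, λ_i}`: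
    (∃ e : (invLim lam ⊓ Subgroup.pi Set.univ H : Subgroup (∀ i, G i)) ≃*
        (invLim lam ⊓ Subgroup.pi Set.univ H' : Subgroup (∀ i, G i)),
      ∀ (x : (invLim lam ⊓ Subgroup.pi Set.univ H : Subgroup (∀ i, G i))) (i : ℕ)
        (hm : (x : ∀ i, G i) i ∈ H i),
        ((e x : ∀ i, G i) i) = ((φ i) ⟨(x : ∀ i, G i) i, hm⟩ : G i)) ∧
    -- and the induced HNN sequence is stable:
    ∀ (lamBar : ∀ i, HNNExtension (G (i + 1)) (H (i + 1)) (H' (i + 1)) (φ (i + 1)) →*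
        HNNExtension (G i) (H i) (H' i) (φ i)),
      (∀ i (g : G (i + 1)), lamBar i (HNNExtension.of g) = HNNExtension.of (lam i g)) →
      (∀ i, lamBar i HNNExtension.t = HNNExtension.t) →
      Stable (G := fun i => HNNExtension (G i) (H i) (H' i) (φ i)) lamBar := by
  constructor
  · -- Part 1: the limit isomorphism
    have memH : ∀ (x : (invLim lam ⊓ Subgroup.pi Set.univ H : Subgroup (∀ i, G i))) (i : ℕ),
        (x : ∀ i, G i) i ∈ H i := by
      intro x i
      exact (Subgroup.mem_inf.mp x.2).2 i (Set.mem_univ i)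
    have memH' : ∀ (x : (invLim lam ⊓ Subgroup.pi Set.univ H' : Subgroup (∀ i, G i))) (i : ℕ),
        (x : ∀ i, G i) i ∈ H' i := by
      intro x i
      exact (Subgroup.mem_inf.mp x.2).2 i (Set.mem_univ i)
    have memLim : ∀ (x : (invLim lam ⊓ Subgroup.pi Set.univ H : Subgroup (∀ i, G i))) (i : ℕ),
        lam i ((x : ∀ i, G i) (i + 1)) = (x : ∀ i, G i) i :=
      fun x => (Subgroup.mem_inf.mp x.2).1
    have memLim' : ∀ (x : (invLim lam ⊓ Subgroup.pi Set.univ H' : Subgroup (∀ i, G i))) (i : ℕ),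
        lam i ((x : ∀ i, G i) (i + 1)) = (x : ∀ i, G i) i :=
      fun x => (Subgroup.mem_inf.mp x.2).1
    have hcs := hcomp_symm lam H H' φ hH hcomp
    refine ⟨MulEquiv.mk ⟨
      fun x => ⟨fun i => ((φ i) ⟨(x : ∀ i, G i) i, memH x i⟩ : G i), ?_⟩,
      fun y => ⟨fun i => (((φ i).symm ⟨(y : ∀ i, G i) i, memH' y i⟩ : H i) : G i), ?_⟩,
      ?_, ?_⟩ ?_, ?_⟩
    · -- toFun membership
      refine Subgroup.mem_inf.mpr ⟨?_, (Subgroup.mem_pi Set.univ).mpr fun i _ => ((φ i) _).2⟩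
      intro i
      have h := hcomp i ⟨(x : ∀ i, G i) (i + 1), memH x (i + 1)⟩
        (hH i _ (memH x (i + 1)))
      have harg : (⟨lam i ((x : ∀ i, G i) (i + 1)), hH i _ (memH x (i + 1))⟩ : H i)
          = ⟨(x : ∀ i, G i) i, memH x i⟩ := Subtype.ext (memLim x i)
      rw [← h, harg]
    · -- invFun membership
      refine Subgroup.mem_inf.mpr ⟨?_, (Subgroup.mem_pi Set.univ).mpr fun i _ => ((φ i).symm _).2⟩
      intro i
      have h := hcs i ⟨(y : ∀ i, G i) (i + 1), memH' y (i + 1)⟩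
        (hH' i _ (memH' y (i + 1)))
      have harg : (⟨lam i ((y : ∀ i, G i) (i + 1)), hH' i _ (memH' y (i + 1))⟩ : H' i)
          = ⟨(y : ∀ i, G i) i, memH' y i⟩ := Subtype.ext (memLim' y i)
      rw [← h, harg]
    · -- left inverse
      intro x
      refine Subtype.ext (funext fun i => ?_)
      show (((φ i).symm ⟨((φ i) ⟨(x : ∀ i, G i) i, memH x i⟩ : G i), _⟩ : H i) : G i)
        = (x : ∀ i, G i) i
      rw [show (⟨((φ i) ⟨(x : ∀ i, G i) i, memH x i⟩ : G i), _⟩ : H' i)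
          = (φ i) ⟨(x : ∀ i, G i) i, memH x i⟩ from Subtype.ext rfl,
        MulEquiv.symm_apply_apply]
    · -- right inverse
      intro y
      refine Subtype.ext (funext fun i => ?_)
      show (((φ i) ⟨(((φ i).symm ⟨(y : ∀ i, G i) i, memH' y i⟩ : H i) : G i), _⟩ : H' i) : G i)
        = (y : ∀ i, G i) i
      rw [show (⟨(((φ i).symm ⟨(y : ∀ i, G i) i, memH' y i⟩ : H i) : G i), _⟩ : H i)
          = (φ i).symm ⟨(y : ∀ i, G i) i, memH' y i⟩ from Subtype.ext rfl,
        MulEquiv.apply_symm_apply]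
    · -- multiplicative
      intro x y
      refine Subtype.ext (funext fun i => ?_)
      show ((φ i) ⟨((x * y : _) : ∀ i, G i) i, _⟩ : G i)
        = ((φ i) ⟨(x : ∀ i, G i) i, memH x i⟩ : G i) * ((φ i) ⟨(y : ∀ i, G i) i, memH y i⟩ : G i)
      rw [show (⟨((x * y : _) : ∀ i, G i) i, _⟩ : H i)
          = ⟨(x : ∀ i, G i) i, memH x i⟩ * ⟨(y : ∀ i, G i) i, memH y i⟩ from Subtype.ext rfl,
        map_mul]
      rfl
    · -- the stated formula
      intro x i hm
      rfl
  · -- Part 2: stability of the HNN sequence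
    intro lamBar hof htt
    constructor
    · -- pro-monomorphic
      obtain ⟨i₀, hpro⟩ := hGstable.1
      obtain ⟨j₁, hi0j1, hsemi⟩ := hHstable.2 i₀
      refine ⟨j₁, ?_⟩
      intro j hij
      obtain ⟨k₀, hjk₀, hkerEq⟩ := hpro j (hi0j1.trans hij)
      refine ⟨max k₀ j, le_max_right _ _, ?_⟩
      intro k hk₀k
      have hkk : k₀ ≤ k := (le_max_left _ _).trans hk₀k
      have hjk : j ≤ k := hjk₀.trans hkk
      have hik : j₁ ≤ k := hij.trans hjk
      have hi0k : i₀ ≤ k := hi0j1.trans hik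
      have hker0 := hkerEq k hkk
      -- kernel equality at the group level, with arbitrary `≤` proofs
      have hkerG : ∀ g : G k, invSeqComp lam hi0k g = 1 ↔ invSeqComp lam hjk g = 1 := by
        intro g
        constructor
        · intro hg
          have : g ∈ (invSeqComp lam ((hi0j1.trans hij).trans (hjk₀.trans hkk))).ker := hg
          rw [hker0] at this
          exact this
        · intro hg
          have : g ∈ (invSeqComp lam (hjk₀.trans hkk)).ker := hg
          rw [← hker0] at this
          exact this
      have hkerI : ∀ g : G k, invSeqComp lam (hij.trans hjk) g = 1 →
          invSeqComp lam hjk g = 1 := by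
        intro g hg
        exact (hkerG g).mp (invSeqComp_eq_one_of_le lam hi0j1 (hij.trans hjk) hg)
      -- membership transfer using semistability of {H_i}
      have hbH : ∀ g : G k, invSeqComp lam (hij.trans hjk) g ∈ H j₁ →
          ∃ h₀ : H k, invSeqComp lam hjk (g * (h₀ : G k)⁻¹) = 1 := by
        intro g hm
        set x : H j₁ := ⟨invSeqComp lam (hij.trans hjk) g, hm⟩ with hxdef
        have hy : invSeqComp (G := fun i => H i) mu hi0j1 x
            ∈ (invSeqComp (G := fun i => H i) mu hi0j1).range := ⟨x, rfl⟩
        rw [← hsemi k hik] at hy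
        obtain ⟨htil, hhtil⟩ := hy
        refine ⟨htil, ?_⟩
        have hco : invSeqComp lam (hi0j1.trans hik) (htil : G k)
            = invSeqComp lam hi0k g := by
          have h1 := invSeqComp_coe lam H mu hmu (hi0j1.trans hik) htil
          rw [hhtil] at h1
          have h2 := invSeqComp_coe lam H mu hmu hi0j1 x
          rw [← h1, h2]
          show invSeqComp lam hi0j1 (invSeqComp lam (hij.trans hjk) g) = _
          rw [← MonoidHom.comp_apply, ← invSeqComp_trans lam hi0j1 (hij.trans hjk)]
        apply (hkerG _).mp
        rw [map_mul, map_inv]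
        have : invSeqComp lam hi0k (htil : G k) = invSeqComp lam hi0k g := hco
        rw [this, mul_inv_cancel]
      have hbH' : ∀ g : G k, invSeqComp lam (hij.trans hjk) g ∈ H' j₁ →
          ∃ h₀ : H' k, invSeqComp lam hjk (g * (h₀ : G k)⁻¹) = 1 := by
        intro g hm
        set x' : H' j₁ := ⟨invSeqComp lam (hij.trans hjk) g, hm⟩ with hxdef
        set x : H j₁ := (φ j₁).symm x' with hx
        have hy : invSeqComp (G := fun i => H i) mu hi0j1 x
            ∈ (invSeqComp (G := fun i => H i) mu hi0j1).range := ⟨x, rfl⟩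
        rw [← hsemi k hik] at hy
        obtain ⟨htil, hhtil⟩ := hy
        refine ⟨φ k htil, ?_⟩
        have hco0 : invSeqComp (G := fun i => H' i) mu' (hi0j1.trans hik) (φ k htil)
            = invSeqComp (G := fun i => H' i) mu' hi0j1 x' := by
          rw [mu'_phi_invSeqComp lam H H' φ hH hcomp mu mu' hmu hmu' (hi0j1.trans hik) htil,
            hhtil, hx,
            ← mu'_phi_invSeqComp lam H H' φ hH hcomp mu mu' hmu hmu' hi0j1 ((φ j₁).symm x'),
            MulEquiv.apply_symm_apply]
        have hco : invSeqComp lam (hi0j1.trans hik) ((φ k htil : H' k) : G k)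
            = invSeqComp lam hi0k g := by
          have h1 := invSeqComp_coe lam H' mu' hmu' (hi0j1.trans hik) (φ k htil)
          rw [hco0] at h1
          have h2 := invSeqComp_coe lam H' mu' hmu' hi0j1 x'
          rw [← h1, h2]
          show invSeqComp lam hi0j1 (invSeqComp lam (hij.trans hjk) g) = _
          rw [← MonoidHom.comp_apply, ← invSeqComp_trans lam hi0j1 (hij.trans hjk)]
        apply (hkerG _).mp
        rw [map_mul, map_inv]
        have : invSeqComp lam hi0k ((φ k htil : H' k) : G k) = invSeqComp lam hi0k g := hco
        rw [this, mul_inv_cancel]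
      -- now the kernel equality for the HNN sequence
      apply le_antisymm
      · intro w hw
        rcases exists_hnnWord (H k) (H' k) (φ k) w with ⟨hd, l, rfl⟩
        have h1 : invSeqComp (G := fun i => HNNExtension (G i) (H i) (H' i) (φ i)) lamBar
            (hij.trans hjk) (hnnWord (H k) (H' k) (φ k) hd l) = 1 := hw
        exact key_induction lam H H' φ hH hH' hcomp lamBar hof htt hij hjk
          hkerI hbH hbH' l.length hd l le_rfl h1
      · intro w hw
        have hw1 : invSeqComp (G := fun i => HNNExtension (G i) (H i) (H' i) (φ i)) lamBar
            hjk w = 1 := hw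
        show invSeqComp (G := fun i => HNNExtension (G i) (H i) (H' i) (φ i)) lamBar
          (hij.trans hjk) w = 1
        exact invSeqComp_eq_one_of_le _ hij hjk hw1
    · -- semistable
      intro i
      obtain ⟨j, hij, hr⟩ := hGstable.2 i
      refine ⟨j, hij, ?_⟩
      intro k hjk
      exact semistable_transfer lam H H' φ lamBar hof htt hij hjk (hr k hjk)
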